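/- Let k be a field, let X and C be schemes of finite type over k, and let c₁, c₂ : C → X be k-morphisms such that every fiber of the underlying continuous map of c₂ is a finite set (c₂ is quasi-finite). Then for every closed point x of X, the closed set {x} is locally c-invariant: there is an open subset U ⊆ X containing x such that c₁(c₂⁻¹({x} ∩ U)) ⊆ {x} ∪ (X \ U); in fact U := X \ (c₁(c₂⁻¹(x)) \ {x}) is such an open subset. -/

import Mathlib

open AlgebraicGeometry CategoryTheory TopologicalSpace

/-- In a Jacobson space, every point of a finite closed set is a closed point. -/
lemma isClosed_singleton_of_mem_finite_closed {Y : Type*} [TopologicalSpace Y] [JacobsonSpace Y]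
    {Z : Set Y} (hZ : IsClosed Z) (hfin : Z.Finite) {z : Y} (hz : z ∈ Z) :
    IsClosed ({z} : Set Y) := by
  have hcl : IsClosed (Z ∩ closedPoints Y) := by
    rw [← Set.biUnion_of_singleton (Z ∩ closedPoints Y)]
    exact Set.Finite.isClosed_biUnion (hfin.subset Set.inter_subset_left) fun y hy => hy.2
  have h := JacobsonSpace.closure_inter_closedPoints hZ
  rw [hcl.closure_eq] at h
  have hsub : Z ⊆ closedPoints Y := by rw [← h]; exact Set.inter_subset_right
  exact hsub hz

/-- Nullstellensatz-style lemma: for a map `f : A → B` of rings such that `B` is a finite type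
algebra over a field `k` compatibly with `f`, the contraction of a maximal ideal is maximal. -/
lemma comap_isMaximal_aux {k A B : Type*} [Field k] [CommRing A] [CommRing B]
    (gA : k →+* A) (f : A →+* B)
    (hFT : (f.comp gA).FiniteType) (m : Ideal B) [m.IsMaximal] : (m.comap f).IsMaximal := by
  haveI : (m.comap f).IsPrime := Ideal.IsPrime.comap f
  letI : Field (B ⧸ m) := Ideal.Quotient.field m
  have h1 : ((Ideal.Quotient.mk m).comp (f.comp gA)).FiniteType :=
    RingHom.FiniteType.comp (RingHom.FiniteType.of_surjective _ Ideal.Quotient.mk_surjective) hFT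
  have h2 : ((Ideal.Quotient.mk m).comp (f.comp gA)).Finite :=
    RingHom.finite_iff_finiteType_of_isJacobsonRing.mpr h1
  have h3 : ((Ideal.Quotient.mk m).comp (f.comp gA)).IsIntegral := h2.to_isIntegral
  have hinj : Function.Injective (Ideal.quotientMap m f le_rfl) := Ideal.quotientMap_injective
  have hcomm2 : (Ideal.quotientMap m f le_rfl).comp ((Ideal.Quotient.mk (m.comap f)).comp gA)
      = (Ideal.Quotient.mk m).comp (f.comp gA) := by
    rw [← RingHom.comp_assoc, Ideal.quotientMap_comp_mk, RingHom.comp_assoc]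
  have h4 : ((Ideal.Quotient.mk (m.comap f)).comp gA).IsIntegral :=
    RingHom.IsIntegral.tower_bot _ _ hinj (hcomm2.symm ▸ h3)
  letI : Algebra k (A ⧸ m.comap f) := ((Ideal.Quotient.mk (m.comap f)).comp gA).toAlgebra
  haveI : Algebra.IsIntegral k (A ⧸ m.comap f) := ⟨h4⟩
  exact Ideal.Quotient.maximal_of_isField _ (isField_of_isIntegral_of_isField' (Field.toIsField k))

/-- Sections over an affine open of a scheme locally of finite type over a field form a
Jacobson ring. -/
lemma isJacobsonRing_gamma {k : Type*} [Field k] {X : Scheme}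
    (πX : X ⟶ Spec (CommRingCat.of k)) [LocallyOfFiniteType πX] (U : X.affineOpens) :
    IsJacobsonRing Γ(X, U.1) := by
  have hψ : Function.Surjective ((Scheme.ΓSpecIso (CommRingCat.of k)).inv.hom : _ →+* _) :=
    (Scheme.ΓSpecIso (CommRingCat.of k)).commRingCatIsoToRingEquiv.symm.surjective
  haveI : IsJacobsonRing Γ(Spec (CommRingCat.of k), ⊤) :=
    (RingHom.FiniteType.of_surjective _ hψ).isJacobsonRing
  have hft : (πX.appLE ⊤ U.1 le_top).hom.FiniteType :=
    LocallyOfFiniteType.finiteType_of_affine_subset πX (isAffineOpen_top _) U.2 le_top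
  exact hft.isJacobsonRing

lemma jacobsonSpace_of_openEmbedding_range {Y Z : Type*} [TopologicalSpace Y] [TopologicalSpace Z]
    [JacobsonSpace Y] {f : Y → Z} (hf : Topology.IsOpenEmbedding f) {U : Set Z}
    (hU : Set.range f = U) : JacobsonSpace U := by
  subst hU
  have e : Y ≃ₜ Set.range f := hf.isEmbedding.toHomeomorph
  exact JacobsonSpace.of_isClosedEmbedding e.symm.isClosedEmbedding

/-- The underlying space of a scheme locally of finite type over a field is Jacobson. -/
lemma jacobsonSpace_of_scheme {k : Type*} [Field k] (X : Scheme)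
    (πX : X ⟶ Spec (CommRingCat.of k)) [LocallyOfFiniteType πX] : JacobsonSpace X := by
  rw [TopologicalSpace.IsOpenCover.jacobsonSpace_iff (U := fun U : X.affineOpens => U.1)
    (iSup_affineOpens_eq_top X)]
  intro U
  haveI := isJacobsonRing_gamma πX U
  haveI : JacobsonSpace (Spec Γ(X, U.1)) :=
    inferInstanceAs (JacobsonSpace (PrimeSpectrum Γ(X, U.1)))
  haveI := U.2.isOpenImmersion_fromSpec
  exact jacobsonSpace_of_openEmbedding_range U.2.fromSpec.isOpenEmbedding U.2.range_fromSpec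

/-- Images of closed points under morphisms of schemes locally of finite type over a field
are closed points. -/
lemma image_closedPoint_isClosed {k : Type*} [Field k] {X C : Scheme}
    (πX : X ⟶ Spec (CommRingCat.of k)) (πC : C ⟶ Spec (CommRingCat.of k))
    [LocallyOfFiniteType πX] [LocallyOfFiniteType πC]
    (c : C ⟶ X) (hc : c ≫ πX = πC) {z : C} (hz : IsClosed ({z} : Set C)) :
    IsClosed ({c.base z} : Set X) := by
  haveI hJX : JacobsonSpace X := jacobsonSpace_of_scheme X πX
  haveI : LocallyOfFiniteType (c ≫ πX) := hc ▸ ‹LocallyOfFiniteType πC›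
  haveI : LocallyOfFiniteType c := locallyOfFiniteType_of_comp c πX
  -- affine neighborhoods
  obtain ⟨U, hxU, hU⟩ : ∃ U : X.Opens, c.base z ∈ U ∧ IsAffineOpen U := by
    obtain ⟨U, hU, hxU, -⟩ := Opens.isBasis_iff_nbhd.mp X.isBasis_affineOpens
      (show c.base z ∈ (⊤ : X.Opens) from trivial)
    exact ⟨U, hxU, hU⟩
  obtain ⟨V, hV, hzV, hVU⟩ : ∃ V : C.Opens, IsAffineOpen V ∧ z ∈ V ∧ V ≤ c ⁻¹ᵁ U := by
    obtain ⟨V, hV, hzV, hle⟩ := Opens.isBasis_iff_nbhd.mp C.isBasis_affineOpens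
      (show z ∈ c ⁻¹ᵁ U from hxU)
    exact ⟨V, hV, hzV, hle⟩
  -- lift z to Spec Γ(C,V)
  have hrange : Set.range hV.fromSpec.base = (V : Set C) := hV.range_fromSpec
  obtain ⟨z', hz'⟩ : ∃ z', hV.fromSpec.base z' = z := by
    rw [← Set.mem_range, hrange]; exact hzV
  have hembV : Topology.IsOpenEmbedding hV.fromSpec.base :=
    hV.fromSpec.isOpenEmbedding
  have hz'c : IsClosed ({z'} : Set (Spec Γ(C, V))) := by
    have : ({z'} : Set (Spec Γ(C, V))) = hV.fromSpec.base ⁻¹' {z} := by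
      ext w; simp only [Set.mem_singleton_iff, Set.mem_preimage]
      constructor
      · rintro rfl; exact hz'
      · intro h; exact hembV.injective (h.trans hz'.symm)
    rw [this]
    exact hz.preimage hV.fromSpec.base.hom.continuous
  -- maximality
  have hm : (z' : PrimeSpectrum Γ(C, V)).asIdeal.IsMaximal :=
    (PrimeSpectrum.isClosed_singleton_iff_isMaximal _).mp hz'c
  have hψ : Function.Surjective ((Scheme.ΓSpecIso (CommRingCat.of k)).inv.hom : _ →+* _) :=
    (Scheme.ΓSpecIso (CommRingCat.of k)).commRingCatIsoToRingEquiv.symm.surjective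
  have hgA : (((πX.appLE ⊤ U le_top).hom : _ →+* _).comp
      ((Scheme.ΓSpecIso (CommRingCat.of k)).inv.hom : _ →+* _)).FiniteType :=
    RingHom.FiniteType.comp
      (LocallyOfFiniteType.finiteType_of_affine_subset πX (isAffineOpen_top _) hU le_top)
      (RingHom.FiniteType.of_surjective _ hψ)
  have hφ : ((c.appLE U V hVU).hom : _ →+* _).FiniteType :=
    LocallyOfFiniteType.finiteType_of_affine_subset c hU hV hVU
  haveI := hm
  have hmax : ((z' : PrimeSpectrum Γ(C, V)).asIdeal.comap
      ((c.appLE U V hVU).hom : _ →+* _)).IsMaximal :=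
    comap_isMaximal_aux (k := k)
      (((πX.appLE ⊤ U le_top).hom : _ →+* _).comp
        ((Scheme.ΓSpecIso (CommRingCat.of k)).inv.hom : _ →+* _))
      (c.appLE U V hVU).hom (RingHom.FiniteType.comp hφ hgA) _
  -- the image point in Spec Γ(X,U)
  set y' : Spec Γ(X, U) := (Spec.map (c.appLE U V hVU)).base z' with hy'
  have hy'c : IsClosed ({y'} : Set (Spec Γ(X, U))) :=
    (PrimeSpectrum.isClosed_singleton_iff_isMaximal
      ((Spec.map (c.appLE U V hVU)).base z' : PrimeSpectrum Γ(X, U))).mpr hmax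
  -- transport to X
  have hsq := IsAffineOpen.SpecMap_appLE_fromSpec c hU hV hVU
  have himg : hU.fromSpec.base y' = c.base z := by
    have := congrArg (fun f : Spec Γ(C,V) ⟶ X => f.base z') hsq
    simpa [hy', hz'] using this
  have hembU : Topology.IsOpenEmbedding hU.fromSpec.base := hU.fromSpec.isOpenEmbedding
  have : IsLocallyClosed ({c.base z} : Set X) := by
    rw [← himg, ← Set.image_singleton]
    exact hy'c.isLocallyClosed.image hembU.isInducing hembU.isOpen_range.isLocallyClosed
  exact isClosed_singleton_of_isLocallyClosed_singleton this

/-- For a correspondence `c₁, c₂ : C → X` of schemes of finite type over a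
field `k` with `c₂` quasi-finite (finite fibers), every closed point `x` of `X` is locally
c-invariant; in fact `U := X \ (c₁(c₂⁻¹(x)) \ {x})` is the required open neighborhood. -/
theorem stmt3 (k : Type*) [Field k] (X C : Scheme)
    (πX : X ⟶ Spec (CommRingCat.of k)) (πC : C ⟶ Spec (CommRingCat.of k))
    [LocallyOfFiniteType πX] [QuasiCompact πX]
    [LocallyOfFiniteType πC] [QuasiCompact πC]
    (c₁ c₂ : C ⟶ X) (hc₁ : c₁ ≫ πX = πC) (hc₂ : c₂ ≫ πX = πC)
    (hqf : ∀ x : X, (c₂.base ⁻¹' {x}).Finite)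
    (x : X) (hx : IsClosed ({x} : Set X)) :
    IsOpen ((c₁.base '' (c₂.base ⁻¹' {x}) \ {x})ᶜ) ∧
    x ∈ (c₁.base '' (c₂.base ⁻¹' {x}) \ {x})ᶜ ∧
    c₁.base '' (c₂.base ⁻¹' ({x} ∩ (c₁.base '' (c₂.base ⁻¹' {x}) \ {x})ᶜ)) ⊆
      {x} ∪ ((c₁.base '' (c₂.base ⁻¹' {x}) \ {x})ᶜ)ᶜ := by
  haveI : JacobsonSpace C := jacobsonSpace_of_scheme C πC
  set F : Set C := c₂.base ⁻¹' {x} with hF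
  have hFclosed : IsClosed F := hx.preimage c₂.base.hom.continuous
  have hFfin : F.Finite := hqf x
  set S : Set X := c₁.base '' F \ {x} with hS
  have hSclosed : IsClosed S := by
    have hSfin : S.Finite := by
      rw [hS]; exact (hFfin.image _).subset Set.diff_subset
    have : S = ⋃ y ∈ S, {y} := (Set.biUnion_of_singleton S).symm
    rw [this]
    refine Set.Finite.isClosed_biUnion hSfin ?_
    rintro y ⟨⟨z, hzF, rfl⟩, -⟩
    have hzc : IsClosed ({z} : Set C) :=
      isClosed_singleton_of_mem_finite_closed hFclosed hFfin hzF
    exact image_closedPoint_isClosed πX πC c₁ hc₁ hzc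
  refine ⟨hSclosed.isOpen_compl, fun h => h.2 rfl, ?_⟩
  rintro y ⟨w, hw, rfl⟩
  have hwx : c₂.base w = x := hw.1
  rw [compl_compl]
  by_cases hyx : c₁.base w = x
  · exact Or.inl hyx
  · exact Or.inr ⟨⟨w, hwx, rfl⟩, hyx⟩
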